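/- Let N be an even positive integer and consider the Hilbert space (ℂ²)^⊗N of N qubits. Define V = Σ_{k=1}^{N/2} (σ^x_{2k-1} σ^y_{2k} − σ^y_{2k} σ^x_{2k+1}) with periodic identification σ_{N+1} = σ_1. Then any product state Ψ = φ_1 ⊗ ζ_1 ⊗ φ_2 ⊗ ζ_2 ⊗ … ⊗ φ_{N/2} ⊗ ζ_{N/2}, where each φ_j ∈ {(1,1)ᵀ, (1,−1)ᵀ} and each ζ_j ∈ {(1,i)ᵀ, (1,−i)ᵀ}, is an eigenvector of V with eigenvalue N − 2M, where M is the number of links n (1 ≤ n ≤ N, cyclically) at which the in-plane polarization angle decreases by π/2 (an 'anticlockwise' link, i.e., a kink). -/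

import Mathlib

noncomputable section
open Matrix Complex BigOperators Finset

/-- Pauli x matrix. -/
def pX : Matrix (Fin 2) (Fin 2) ℂ := !![0, 1; 1, 0]
/-- Pauli y matrix. -/
def pY : Matrix (Fin 2) (Fin 2) ℂ := !![0, -Complex.I; Complex.I, 0]
/-- Pauli z matrix. -/
def pZ : Matrix (Fin 2) (Fin 2) ℂ := !![1, 0; 0, -1]

/-- The operator acting as `A` on the `n`-th qubit (0-based) and as identity elsewhere,
on the `N`-qubit space `(ℂ²)^⊗N`, realized as matrices indexed by `Fin N → Fin 2`. -/
def site (N : ℕ) (A : Matrix (Fin 2) (Fin 2) ℂ) (n : Fin N) :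
    Matrix (Fin N → Fin 2) (Fin N → Fin 2) ℂ :=
  Matrix.of fun s t => ∏ j : Fin N, if j = n then A (s j) (t j) else if s j = t j then 1 else 0

/-- The chiral operator `V = Σ_{k=1}^{N/2} (σ^x_{2k-1} σ^y_{2k} − σ^y_{2k} σ^x_{2k+1})`
(1-based paper indices; here sites are 0-based, and indices are taken mod N via `Nat.cast`). -/
def Vop (N : ℕ) [NeZero N] : Matrix (Fin N → Fin 2) (Fin N → Fin 2) ℂ :=
  ∑ k ∈ Finset.range (N / 2),
    (site N pX (Fin.ofNat N (2 * k)) * site N pY (Fin.ofNat N (2 * k + 1))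
      - site N pY (Fin.ofNat N (2 * k + 1)) * site N pX (Fin.ofNat N (2 * k + 2)))

open Fin.NatCast

def qv (e : ℂ) : Fin 2 → ℂ := fun i => if i = 0 then 1 else e

lemma pX_eig (e : ℂ) (h : e ^ 2 = 1) : pX.mulVec (qv e) = e • qv e := by
  funext i
  fin_cases i <;>
    simp [pX, qv, Matrix.mulVec, dotProduct, Fin.sum_univ_two] <;>
    linear_combination -h

lemma pY_eig (e : ℂ) (h : e ^ 2 = -1) :
    pY.mulVec (qv e) = (-Complex.I * e) • qv e := by
  funext i
  fin_cases i <;>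
    simp [pY, qv, Matrix.mulVec, dotProduct, Fin.sum_univ_two] <;>
    linear_combination Complex.I * h

lemma sum_pairs (m : ℕ) (g : ℕ → ℂ) :
    ∑ n ∈ Finset.range (2 * m), g n = ∑ k ∈ Finset.range m, (g (2 * k) + g (2 * k + 1)) := by
  induction m with
  | zero => simp
  | succ m ih =>
    have h2 : 2 * (m + 1) = (2 * m + 1) + 1 := by ring
    rw [h2, Finset.sum_range_succ, Finset.sum_range_succ, ih, Finset.sum_range_succ]
    ring

lemma val_succ_mod_two {N : ℕ} [NeZero N] (hN2 : 2 ∣ N) (hN : 2 ≤ N) (n : Fin N) :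
    (((n + 1 : Fin N)) : ℕ) % 2 = (n.val + 1) % 2 := by
  have h1 : ((1 : Fin N) : ℕ) = 1 := by
    rw [Fin.val_one']; exact Nat.mod_eq_of_lt hN
  have : ((n + 1 : Fin N) : ℕ) = (n.val + 1) % N := by
    rw [Fin.add_def, h1]
  rw [this, Nat.mod_mod_of_dvd _ hN2]

lemma cast_val_mod_two {N : ℕ} [NeZero N] (hN2 : 2 ∣ N) (a : ℕ) :
    (((a : Fin N)) : ℕ) % 2 = a % 2 := by
  rw [Fin.val_natCast, Nat.mod_mod_of_dvd _ hN2]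

lemma link_even {N : ℕ} [NeZero N] (ε : Fin N → ℂ) (n : Fin N)
    (ha : ε n = 1 ∨ ε n = -1) (hb : ε (n + 1) = Complex.I ∨ ε (n + 1) = -Complex.I) :
    -Complex.I * ε (n + 1) * ε n
      = (if ε (n + 1) = -Complex.I * ε n then (-1 : ℂ) else 1) := by
  rcases ha with h1 | h1 <;> rcases hb with h2 | h2 <;>
    rw [h1, h2] <;> norm_num [Complex.ext_iff]

lemma link_odd {N : ℕ} [NeZero N] (ε : Fin N → ℂ) (n : Fin N)
    (hb : ε n = Complex.I ∨ ε n = -Complex.I) (hc : ε (n + 1) = 1 ∨ ε (n + 1) = -1) :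
    Complex.I * ε n * ε (n + 1)
      = (if ε (n + 1) = -Complex.I * ε n then (-1 : ℂ) else 1) := by
  rcases hb with h1 | h1 <;> rcases hc with h2 | h2 <;>
    rw [h1, h2] <;> norm_num [Complex.ext_iff]

lemma site_mulVec {N : ℕ} (A : Matrix (Fin 2) (Fin 2) ℂ) (n : Fin N)
    (f : Fin N → Fin 2 → ℂ) :
    (site N A n).mulVec (fun s => ∏ j, f j (s j))
      = fun s => ∏ j, Function.update f n (A.mulVec (f n)) j (s j) := by
  funext s
  simp only [Matrix.mulVec, dotProduct, site, Matrix.of_apply]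
  have : ∀ t : Fin N → Fin 2,
      (∏ j, if j = n then A (s j) (t j) else if s j = t j then 1 else 0) * ∏ j, f j (t j)
      = ∏ j, ((if j = n then A (s j) (t j) else if s j = t j then 1 else 0) * f j (t j)) := by
    intro t; rw [← Finset.prod_mul_distrib]
  simp only [this]
  rw [← Fintype.piFinset_univ,
    ← Finset.prod_univ_sum (fun _ : Fin N => (univ : Finset (Fin 2)))
      (fun j i => (if j = n then A (s j) i else if s j = i then 1 else 0) * f j i)]
  refine Finset.prod_congr rfl fun j _ => ?_
  by_cases hj : j = n
  · subst hj
    simp [Function.update_self, Matrix.mulVec, dotProduct]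
    generalize s j = i; fin_cases i <;> simp
  · simp only [if_neg hj, Function.update_of_ne hj]
    simp [ite_mul]

lemma site_eig {N : ℕ} (A : Matrix (Fin 2) (Fin 2) ℂ) (n : Fin N)
    (f : Fin N → Fin 2 → ℂ) (c : ℂ) (h : A.mulVec (f n) = c • f n) :
    (site N A n).mulVec (fun s => ∏ j, f j (s j)) = c • fun s => ∏ j, f j (s j) := by
  rw [site_mulVec, h]
  funext s
  have h2 : (fun j => Function.update f n (c • f n) j (s j))
      = Function.update (fun j => f j (s j)) n (c * f n (s n)) := by
    funext j
    by_cases hj : j = n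
    · subst hj; simp
    · simp [Function.update_of_ne hj]
  simp only [Pi.smul_apply, smul_eq_mul]
  calc ∏ j, Function.update f n (c • f n) j (s j)
      = ∏ j, Function.update (fun j => f j (s j)) n (c * f n (s n)) j := by rw [h2]
    _ = (c * f n (s n)) * ∏ j ∈ univ \ {n}, f j (s j) :=
        Finset.prod_update_of_mem (mem_univ n) _ _
    _ = c * ((f n (s n)) * ∏ j ∈ univ \ {n}, f j (s j)) := by ring
    _ = c * ∏ j, f j (s j) := by
        rw [Finset.prod_eq_mul_prod_sdiff_singleton_of_mem (mem_univ n) (fun j => f j (s j))]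

lemma pair_eig {N : ℕ} (A B : Matrix (Fin 2) (Fin 2) ℂ) (n m : Fin N)
    (f : Fin N → Fin 2 → ℂ) (cA cB : ℂ)
    (hA : A.mulVec (f n) = cA • f n) (hB : B.mulVec (f m) = cB • f m) :
    (site N A n * site N B m).mulVec (fun s => ∏ j, f j (s j))
      = (cA * cB) • fun s => ∏ j, f j (s j) := by
  rw [← Matrix.mulVec_mulVec, site_eig B m f cB hB, Matrix.mulVec_smul,
    site_eig A n f cA hA, smul_smul, mul_comm cB cA]

lemma sum_mulVec' {α : Type*} [Fintype α] {s : Finset ℕ}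
    (A : ℕ → Matrix α α ℂ) (v : α → ℂ) :
    (∑ k ∈ s, A k).mulVec v = ∑ k ∈ s, (A k).mulVec v := by
  induction s using Finset.cons_induction with
  | empty => simp [Matrix.mulVec]
  | cons a s ha ih => simp [Finset.sum_cons, Matrix.add_mulVec, ih, Finset.sum_insert ha]



/-- any product state with odd (paper-1-based) qubits polarized in `±x`
and even qubits polarized in `±y` directions is an eigenvector of `V` with eigenvalue
`N − 2M`, where `M` is the number of "anticlockwise" links (kinks), i.e. cyclic links
`(n, n+1)` where the in-plane polarization phase `ε` is multiplied by `−i`.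
Site `j` (0-based) carries single-qubit state `(1, ε j)ᵀ` (overall normalization omitted,
being irrelevant for the eigenvalue equation). -/
theorem stmt0 (N : ℕ) [NeZero N] (hN : 0 < N) (hEven : Even N)
    (ε : Fin N → ℂ)
    (hx : ∀ n : Fin N, (n : ℕ) % 2 = 0 → ε n = 1 ∨ ε n = -1)
    (hy : ∀ n : Fin N, (n : ℕ) % 2 = 1 → ε n = Complex.I ∨ ε n = -Complex.I)
    (M : ℕ)
    (hM : M = (Finset.univ.filter fun n : Fin N => ε (n + 1) = -Complex.I * ε n).card)
    (Ψ : (Fin N → Fin 2) → ℂ)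
    (hΨ : Ψ = fun s => ((Real.sqrt 2 : ℂ))⁻¹ ^ N * ∏ j : Fin N, (if s j = 0 then 1 else ε j)) :
    (Vop N).mulVec Ψ = ((N : ℂ) - 2 * M) • Ψ := by
  have hN2 : 2 ∣ N := hEven.two_dvd
  have hN2' : 2 ≤ N := Nat.le_of_dvd hN hN2
  -- product state
  set f : Fin N → Fin 2 → ℂ := fun j => qv (ε j) with hf
  set P : (Fin N → Fin 2) → ℂ := fun s => ∏ j, f j (s j) with hPdef
  have hΨ' : Ψ = ((Real.sqrt 2 : ℂ))⁻¹ ^ N • P := by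
    rw [hΨ]; funext s; simp [hPdef, hf, qv]
  -- the link weight
  set t : Fin N → ℂ := fun n => if ε (n + 1) = -Complex.I * ε n then (-1 : ℂ) else 1 with ht
  -- eigenvalue equation on the bare product state
  have key : (Vop N).mulVec P = ((N : ℂ) - 2 * M) • P := by
    have hterm : ∀ k ∈ Finset.range (N / 2),
        (site N pX (↑(2 * k)) * site N pY (↑(2 * k + 1))
          - site N pY (↑(2 * k + 1)) * site N pX (↑(2 * k + 2))).mulVec P
        = (t ((2 * k : ℕ) : Fin N) + t ((2 * k + 1 : ℕ) : Fin N)) • P := by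
      intro k _
      have hcast1 : ((2 * k + 1 : ℕ) : Fin N) = ((2 * k : ℕ) : Fin N) + 1 := by
        push_cast; ring
      have hcast2 : ((2 * k + 2 : ℕ) : Fin N) = ((2 * k + 1 : ℕ) : Fin N) + 1 := by
        rw [show 2 * k + 2 = (2 * k + 1) + 1 by ring, Nat.cast_succ]
      have ha : ε ((2 * k : ℕ) : Fin N) = 1 ∨ ε ((2 * k : ℕ) : Fin N) = -1 := by
        refine hx _ ?_; rw [cast_val_mod_two hN2]; omega
      have hb : ε ((2 * k + 1 : ℕ) : Fin N) = Complex.I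
          ∨ ε ((2 * k + 1 : ℕ) : Fin N) = -Complex.I := by
        refine hy _ ?_; rw [cast_val_mod_two hN2]; omega
      have hc : ε ((2 * k + 2 : ℕ) : Fin N) = 1 ∨ ε ((2 * k + 2 : ℕ) : Fin N) = -1 := by
        refine hx _ ?_; rw [cast_val_mod_two hN2]; omega
      have ha2 : (ε ((2 * k : ℕ) : Fin N)) ^ 2 = 1 := by rcases ha with h | h <;> rw [h] <;> ring
      have hb2 : (ε ((2 * k + 1 : ℕ) : Fin N)) ^ 2 = -1 := by
        rcases hb with h | h <;> rw [h] <;> simp [pow_two]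
      have hc2 : (ε ((2 * k + 2 : ℕ) : Fin N)) ^ 2 = 1 := by
        rcases hc with h | h <;> rw [h] <;> ring
      have eA := pX_eig _ ha2
      have eB := pY_eig _ hb2
      have eC := pX_eig _ hc2
      rw [Matrix.sub_mulVec, hPdef,
        pair_eig pX pY _ _ f _ _ eA eB, pair_eig pY pX _ _ f _ _ eB eC, ← sub_smul]
      congr 1
      have he : -Complex.I * ε (((2 * k : ℕ) : Fin N) + 1) * ε ((2 * k : ℕ) : Fin N)
          = t ((2 * k : ℕ) : Fin N) := by
        rw [ht]; exact link_even ε _ ha (hcast1 ▸ hb)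
      have ho : Complex.I * ε ((2 * k + 1 : ℕ) : Fin N) * ε (((2 * k + 1 : ℕ) : Fin N) + 1)
          = t ((2 * k + 1 : ℕ) : Fin N) := by
        rw [ht]; exact link_odd ε _ hb (hcast2 ▸ hc)
      rw [← he, ← ho, ← hcast1, ← hcast2]
      ring
    have hsum : ∑ k ∈ Finset.range (N / 2),
        (t ((2 * k : ℕ) : Fin N) + t ((2 * k + 1 : ℕ) : Fin N)) = (N : ℂ) - 2 * M := by
      have h1 : ∑ k ∈ Finset.range (N / 2),
          (t ((2 * k : ℕ) : Fin N) + t ((2 * k + 1 : ℕ) : Fin N))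
          = ∑ n ∈ Finset.range N, t ((n : ℕ) : Fin N) := by
        rw [← sum_pairs (N / 2) (fun m => t ((m : ℕ) : Fin N)), Nat.mul_div_cancel' hN2]
      have h2 : ∑ n ∈ Finset.range N, t ((n : ℕ) : Fin N) = ∑ n : Fin N, t n := by
        rw [← Fin.sum_univ_eq_sum_range (fun m => t ((m : ℕ) : Fin N)) N]
        exact Finset.sum_congr rfl fun n _ => by rw [Fin.cast_val_eq_self]
      have h3 : ∑ n : Fin N, t n = (N : ℂ) - 2 * M := by
        have : ∀ n : Fin N, t n
            = 1 - 2 * (if ε (n + 1) = -Complex.I * ε n then (1 : ℂ) else 0) := by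
          intro n; simp only [ht]; split_ifs <;> ring
        rw [Finset.sum_congr rfl fun n _ => this n, Finset.sum_sub_distrib,
          Finset.sum_const, ← Finset.mul_sum, Finset.sum_boole, hM]
        simp [mul_comm]
      rw [h1, h2, h3]
    rw [Vop]; simp only [Fin.ofNat_eq_cast]; rw [sum_mulVec', Finset.sum_congr rfl hterm, ← Finset.sum_smul, hsum]
  rw [hΨ', Matrix.mulVec_smul, key, smul_comm]
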